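/- Let A ∈ R^{m×n} have full row rank with all columns of unit Euclidean norm. Then κ_A ≤ 1/δ_{A^T}, where δ_{A^T} is the largest value δ such that for any linearly independent subset {a_i : i ∈ I} of the columns of A and any λ ∈ R^I, ‖Σ_{i∈I} λ_i a_i‖ ≥ δ · max_{i∈I} |λ_i| ‖a_i‖. -/

import Mathlib

open Finset

variable {ι : Type*} [Fintype ι] [DecidableEq ι]

/-- `y` conforms to `x` if `x i * y i > 0` whenever `y i ≠ 0`. -/
def Conforms (y x : ι → ℝ) : Prop := ∀ i, y i ≠ 0 → x i * y i > 0

/-- An elementary vector of `W`: a support-minimal nonzero vector of `W`. -/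
def IsElementary (W : Submodule ℝ (ι → ℝ)) (g : ι → ℝ) : Prop :=
  g ∈ W ∧ g ≠ 0 ∧
    ∀ h ∈ W, h ≠ 0 → {i | h i ≠ 0} ⊆ {i | g i ≠ 0} → {i | h i ≠ 0} = {i | g i ≠ 0}

/-- The fractional circuit imbalance measure `κ_W`. -/
noncomputable def kappa (W : Submodule ℝ (ι → ℝ)) : ℝ :=
  sSup ({1} ∪ {t : ℝ | ∃ g : ι → ℝ, IsElementary W g ∧
    ∃ i j, g i ≠ 0 ∧ g j ≠ 0 ∧ t = |g j| / |g i|})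

/-- An integer elementary vector, normalized so that the gcd of its entries is 1. -/
def IsIntElementary (W : Submodule ℝ (ι → ℝ)) (g : ι → ℤ) : Prop :=
  IsElementary W (fun i => (g i : ℝ)) ∧ Finset.univ.gcd (fun i => (g i).natAbs) = 1

/-- The max-circuit imbalance measure `κ̄_W`. -/
noncomputable def barKappa (W : Submodule ℝ (ι → ℝ)) : ℕ :=
  sSup {k : ℕ | ∃ g : ι → ℤ, IsIntElementary W g ∧
    k = Finset.univ.sup fun i => (g i).natAbs}

/-- The lcm-circuit imbalance measure `κ̇_W`: the least positive integer divisible by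
every entry of every normalized integer elementary vector. -/
noncomputable def dotKappa (W : Submodule ℝ (ι → ℝ)) : ℕ :=
  sInf {k : ℕ | 0 < k ∧ ∀ g : ι → ℤ, IsIntElementary W g → ∀ i, g i ≠ 0 → (g i).natAbs ∣ k}

/-- A rational linear subspace: one spanned by rational vectors. -/
def IsRationalSubspace (W : Submodule ℝ (ι → ℝ)) : Prop :=
  ∃ S : Set (ι → ℚ), W = Submodule.span ℝ ((fun v : ι → ℚ => fun i => ((v i : ℝ))) '' S)

/-- The orthogonal complement of `W` in `ℝ^ι` with the standard inner product. -/
def orthComp (W : Submodule ℝ (ι → ℝ)) : Submodule ℝ (ι → ℝ) where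
  carrier := {v | ∀ w ∈ W, ∑ i, v i * w i = 0}
  add_mem' := by
    intro a b ha hb w hw
    have := ha w hw
    have := hb w hw
    simp only [Set.mem_setOf_eq, Pi.add_apply, add_mul, Finset.sum_add_distrib, *]
    ring
  zero_mem' := by intro w hw; simp
  smul_mem' := by
    intro c a ha w hw
    have h := ha w hw
    simp only [Set.mem_setOf_eq, Pi.smul_apply, smul_eq_mul, mul_assoc, ← Finset.mul_sum, h,
      mul_zero]


private lemma key_anti {m n : ℕ} (A : Matrix (Fin m) (Fin n) ℝ) (I : Finset (Fin n))
    (hI : LinearIndependent ℝ (fun i : ↥I => fun r => A r (i : Fin n))) :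
    ∃ c > 0, ∀ lam : ↥I → ℝ, ∀ i : ↥I,
      c * |lam i| ≤ Real.sqrt (∑ r, (∑ k : ↥I, lam k * A r (k : Fin n)) ^ 2) := by
  classical
  let f : (↥I → ℝ) →ₗ[ℝ] EuclideanSpace ℝ (Fin m) :=
  { toFun := fun lam => (WithLp.toLp 2 (fun r => ∑ k : ↥I, lam k * A r (k : Fin n)) : EuclideanSpace ℝ (Fin m))
    map_add' := by
      intro x y
      ext r
      show ∑ k : ↥I, (x k + y k) * A r (k : Fin n) = _
      simp [add_mul, Finset.sum_add_distrib]
    map_smul' := by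
      intro c x
      ext r
      show ∑ k : ↥I, (c * x k) * A r (k : Fin n) = _
      simp [Finset.mul_sum, mul_assoc] }
  have hker : LinearMap.ker f = ⊥ := by
    rw [LinearMap.ker_eq_bot']
    intro x hx
    have hx' : ∀ r, ∑ k : ↥I, x k * A r (k : Fin n) = 0 := fun r => congr_fun (congrArg WithLp.ofLp hx) r
    have := Fintype.linearIndependent_iff.mp hI x ?_
    · funext k; exact this k
    · funext r
      simpa [Finset.sum_apply] using hx' r
  obtain ⟨K, hK, hanti⟩ := f.exists_antilipschitzWith hker
  refine ⟨(K : ℝ)⁻¹, by positivity, fun lam i => ?_⟩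
  have h1 : ‖lam‖ ≤ K * ‖f lam‖ := by
    have := hanti.le_mul_dist lam 0
    simpa [dist_zero_right, map_zero] using this
  have h2 : |lam i| ≤ ‖lam‖ := by
    simpa [Real.norm_eq_abs] using norm_le_pi_norm lam i
  have h3 : ‖f lam‖ = Real.sqrt (∑ r, (∑ k : ↥I, lam k * A r (k : Fin n)) ^ 2) := by
    rw [EuclideanSpace.norm_eq]
    congr 1
    refine Finset.sum_congr rfl fun r _ => ?_
    rw [Real.norm_eq_abs, sq_abs]
    rfl
  rw [← h3]
  have hKpos : (0:ℝ) < K := by exact_mod_cast hK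
  calc (K:ℝ)⁻¹ * |lam i| ≤ (K:ℝ)⁻¹ * (K * ‖f lam‖) := by
        apply mul_le_mul_of_nonneg_left (h2.trans h1) (by positivity)
    _ = ‖f lam‖ := by field_simp

private lemma circuit_indep {m n : ℕ} (A : Matrix (Fin m) (Fin n) ℝ) (g : Fin n → ℝ)
    (hg : IsElementary (LinearMap.ker A.mulVecLin) g) (i : Fin n) (hgi : g i ≠ 0)
    [DecidablePred fun k => g k ≠ 0] :
    LinearIndependent ℝ
      (fun k : ↥((univ.filter fun k => g k ≠ 0).erase i) => fun r => A r (k : Fin n)) := by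
  classical
  set I := (univ.filter fun k => g k ≠ 0).erase i with hIdef
  rw [Fintype.linearIndependent_iff]
  intro c hc
  set h : Fin n → ℝ := fun k => if hk : k ∈ I then c ⟨k, hk⟩ else 0 with hh
  have hck : ∀ k : ↥I, h (k : Fin n) = c k := by
    intro k; simp only [hh, dif_pos k.2]
  have hhker : h ∈ LinearMap.ker A.mulVecLin := by
    rw [LinearMap.mem_ker]
    funext r
    show ∑ k, A r k * h k = 0
    have e1 : ∑ k, A r k * h k = ∑ k ∈ I, A r k * h k := by
      refine (Finset.sum_subset (Finset.subset_univ I) fun k _ hk => ?_).symm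
      simp [hh, dif_neg hk]
    have e2 : ∑ k ∈ I, A r k * h k = ∑ k : ↥I, A r (k : Fin n) * h (k : Fin n) :=
      (Finset.sum_coe_sort I fun k => A r k * h k).symm
    have e3 : (∑ k : ↥I, c k • fun r => A r (k : Fin n)) r = 0 := by rw [hc]; rfl
    rw [e1, e2]
    simp only [Finset.sum_apply, Pi.smul_apply, smul_eq_mul] at e3
    calc ∑ k : ↥I, A r (k : Fin n) * h (k : Fin n)
        = ∑ k : ↥I, c k * A r (k : Fin n) := by
          refine Finset.sum_congr rfl fun k _ => ?_; rw [hck k, mul_comm]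
      _ = 0 := e3
  have hh0 : h = 0 := by
    by_contra hne
    have hsub : {k | h k ≠ 0} ⊆ {k | g k ≠ 0} := by
      intro k hk
      by_contra hgk
      have : k ∉ I := by simp [hIdef, not_not.mp hgk]
      exact hk (by simp [hh, dif_neg this])
    have heq := hg.2.2 h hhker hne hsub
    have hi_in : i ∈ {k | h k ≠ 0} := heq ▸ hgi
    have : h i = 0 := by simp [hh, hIdef]
    exact hi_in this
  intro k
  rw [← hck k, hh0]; rfl


/-- if `A` has full row rank and unit-norm columns, then
`κ_A ≤ 1 / δ_{Aᵀ}`, where `δ_{Aᵀ}` is the largest `δ` such that for any linearly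
independent set of columns `{a_i : i ∈ I}` and any `λ`,
`‖∑ λ_i a_i‖ ≥ δ · max_i |λ_i| ‖a_i‖`. -/
theorem kappa_le_inv_delta {m n : ℕ} (A : Matrix (Fin m) (Fin n) ℝ)
    (hrank : A.rank = m) (hcols : ∀ j, ∑ i, A i j ^ 2 = 1) (δ : ℝ)
    (hδ : IsGreatest {d : ℝ | ∀ I : Finset (Fin n),
        LinearIndependent ℝ (fun i : ↥I => fun r => A r (i : Fin n)) →
        ∀ lam : ↥I → ℝ, ∀ i : ↥I,
          d * (|lam i| * Real.sqrt (∑ r, A r (i : Fin n) ^ 2)) ≤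
            Real.sqrt (∑ r, (∑ i : ↥I, lam i * A r (i : Fin n)) ^ 2)} δ) :
    kappa (LinearMap.ker A.mulVecLin) ≤ 1 / δ := by
  classical
  rcases Nat.eq_zero_or_pos n with hn | hn
  · exfalso
    have h1 : (δ + 1) ∈ {d : ℝ | ∀ I : Finset (Fin n),
        LinearIndependent ℝ (fun i : ↥I => fun r => A r (i : Fin n)) →
        ∀ lam : ↥I → ℝ, ∀ i : ↥I,
          d * (|lam i| * Real.sqrt (∑ r, A r (i : Fin n) ^ 2)) ≤
            Real.sqrt (∑ r, (∑ i : ↥I, lam i * A r (i : Fin n)) ^ 2)} := by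
      intro I hI lam i
      subst hn
      exact (i : Fin 0).elim0
    linarith [hδ.2 h1]
  have sqrt1 : ∀ j, Real.sqrt (∑ r, A r j ^ 2) = 1 := by
    intro j; rw [hcols j, Real.sqrt_one]
  -- δ ≤ 1
  have hδ1 : δ ≤ 1 := by
    set j0 : Fin n := ⟨0, hn⟩ with hj0
    letI : Unique ↥({j0} : Finset (Fin n)) :=
      ⟨⟨⟨j0, Finset.mem_singleton_self j0⟩⟩, fun k => Subtype.ext (Finset.mem_singleton.mp k.2)⟩
    have hind : LinearIndependent ℝ
        (fun k : ↥({j0} : Finset (Fin n)) => fun r => A r (k : Fin n)) := by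
      apply linearIndependent_unique_iff.mpr
      intro h0
      have h1 : ∀ r, A r j0 = 0 := fun r => by exact congr_fun h0 r
      have : ∑ r, A r j0 ^ 2 = 0 := by simp [h1]
      rw [hcols j0] at this
      norm_num at this
    have happ := hδ.1 {j0} hind (fun _ => 1) ⟨j0, Finset.mem_singleton_self j0⟩
    have hone : ∀ r : Fin m,
        (∑ k : ↥({j0} : Finset (Fin n)), (1:ℝ) * A r (k : Fin n)) = A r j0 := by
      intro r
      rw [Finset.sum_coe_sort ({j0} : Finset (Fin n)) (fun k => (1:ℝ) * A r k),
        Finset.sum_singleton, one_mul]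
    simp only [abs_one, sqrt1 j0, mul_one] at happ
    calc δ ≤ Real.sqrt (∑ r, (∑ k : ↥({j0} : Finset (Fin n)), (1:ℝ) * A r (k : Fin n)) ^ 2) :=
          happ
      _ = 1 := by
          rw [Finset.sum_congr rfl fun r _ => by rw [hone r], hcols j0, Real.sqrt_one]
  -- δ > 0
  have hδpos : 0 < δ := by
    have hc : ∀ I : Finset (Fin n), ∃ c : ℝ, 0 < c ∧
        (LinearIndependent ℝ (fun k : ↥I => fun r => A r (k : Fin n)) →
          ∀ lam : ↥I → ℝ, ∀ i : ↥I,
            c * |lam i| ≤ Real.sqrt (∑ r, (∑ k : ↥I, lam k * A r (k : Fin n)) ^ 2)) := by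
      intro I
      by_cases hI : LinearIndependent ℝ (fun k : ↥I => fun r => A r (k : Fin n))
      · obtain ⟨c, hcp, h⟩ := key_anti A I hI
        exact ⟨c, hcp, fun _ => h⟩
      · exact ⟨1, one_pos, fun h => absurd h hI⟩
    choose c hcpos hcle using hc
    have hne : (univ : Finset (Finset (Fin n))).Nonempty := ⟨∅, mem_univ _⟩
    set d := (univ : Finset (Finset (Fin n))).inf' hne c with hd
    have hdpos : 0 < d := (Finset.lt_inf'_iff hne).mpr fun I _ => hcpos I
    have hdmem : d ∈ {d : ℝ | ∀ I : Finset (Fin n),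
        LinearIndependent ℝ (fun i : ↥I => fun r => A r (i : Fin n)) →
        ∀ lam : ↥I → ℝ, ∀ i : ↥I,
          d * (|lam i| * Real.sqrt (∑ r, A r (i : Fin n) ^ 2)) ≤
            Real.sqrt (∑ r, (∑ i : ↥I, lam i * A r (i : Fin n)) ^ 2)} := by
      intro I hI lam i
      rw [sqrt1, mul_one]
      calc d * |lam i| ≤ c I * |lam i| :=
            mul_le_mul_of_nonneg_right (Finset.inf'_le _ (mem_univ I)) (abs_nonneg _)
        _ ≤ _ := hcle I hI lam i
    exact lt_of_lt_of_le hdpos (hδ.2 hdmem)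
  unfold kappa
  apply Real.sSup_le _ (le_of_lt (div_pos one_pos hδpos))
  intro t ht
  rcases ht with ht | ⟨g, hg, i, j, hgi, hgj, rfl⟩
  · rw [Set.mem_singleton_iff] at ht
    subst ht
    rw [le_div_iff₀ hδpos, one_mul]
    exact hδ1
  · rw [div_le_div_iff₀ (abs_pos.mpr hgi) hδpos, one_mul]
    have main : δ * |g j| ≤ |g i| := by
      by_cases hij : j = i
      · subst hij
        exact mul_le_of_le_one_left (abs_nonneg _) hδ1
      · set I := (univ.filter fun k => g k ≠ 0).erase i with hIdef
        have hjI : j ∈ I :=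
          Finset.mem_erase.mpr ⟨hij, Finset.mem_filter.mpr ⟨mem_univ j, hgj⟩⟩
        have hind := circuit_indep A g hg i hgi
        have key : δ * (|g j| * Real.sqrt (∑ r, A r j ^ 2)) ≤
            Real.sqrt (∑ r, (∑ k : ↥I, g (k : Fin n) * A r (k : Fin n)) ^ 2) :=
          hδ.1 I hind (fun k => g (k : Fin n)) ⟨j, hjI⟩
        have hin : ∀ r, (∑ k : ↥I, g (k : Fin n) * A r (k : Fin n)) = -(g i * A r i) := by
          intro r
          have h4 : ∑ k, g k * A r k = 0 := by
            have h5 := congr_fun (LinearMap.mem_ker.mp hg.1) r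
            simpa [Matrix.mulVecLin_apply, Matrix.mulVec, dotProduct, mul_comm]
              using h5
          have h3 : ∑ k ∈ univ.filter (fun k => g k ≠ 0), g k * A r k
              = ∑ k, g k * A r k :=
            Finset.sum_subset (filter_subset _ _) (fun k _ hk => by
              have hzero : g k = 0 :=
                not_not.mp (fun hcon => hk (mem_filter.mpr ⟨mem_univ k, hcon⟩))
              rw [hzero, zero_mul])
          have h2 : g i * A r i + ∑ k ∈ I, g k * A r k
              = ∑ k ∈ univ.filter (fun k => g k ≠ 0), g k * A r k :=
            Finset.add_sum_erase (univ.filter fun k => g k ≠ 0) (fun k => g k * A r k)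
              (mem_filter.mpr ⟨mem_univ i, hgi⟩)
          have h1 : ∑ k : ↥I, g (k : Fin n) * A r (k : Fin n) = ∑ k ∈ I, g k * A r k :=
            Finset.sum_coe_sort I (fun k => g k * A r k)
          rw [h1]; linarith
        have hRHS : Real.sqrt (∑ r, (∑ k : ↥I, g (k : Fin n) * A r (k : Fin n)) ^ 2)
            = |g i| := by
          have hsum : ∑ r, (∑ k : ↥I, g (k : Fin n) * A r (k : Fin n)) ^ 2
              = g i ^ 2 * ∑ r, A r i ^ 2 := by
            rw [Finset.mul_sum]
            refine Finset.sum_congr rfl fun r _ => ?_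
            rw [hin r, neg_sq, mul_pow]
          rw [hsum, hcols i, mul_one, Real.sqrt_sq_eq_abs]
        rw [sqrt1 j, mul_one, hRHS] at key
        exact key
    calc |g j| * δ = δ * |g j| := mul_comm _ _
      _ ≤ |g i| := main
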